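/- Let A be a graded-commutative graded ring and let x be a homogeneous element of degree k > 0 such that multiplication by x gives an isomorphism A^i → A^{i+k} for all i ≥ 0, and suppose k is minimal among degrees of such periodicity-inducing elements. If x = y·z for homogeneous elements y, z with 0 < deg(y) < k, then a contradiction follows; i.e., x does not factor non-trivially. -/
import Mathlib


/-- `x` is a nonzero homogeneous element of degree `k` such that multiplication
by `x` gives an isomorphism `A^i → A^{i+k}` for all `i ≥ 0`. -/
def InducesPeriodicity {A : Type*} [CommRing A] (𝒜 : ℕ → AddSubgroup A)
    (k : ℕ) (x : A) : Prop :=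
  x ≠ 0 ∧ x ∈ 𝒜 k ∧
    (∀ i : ℕ, ∀ a ∈ 𝒜 i, x * a = 0 → a = 0) ∧
    (∀ i : ℕ, ∀ b ∈ 𝒜 (i + k), ∃ a ∈ 𝒜 i, x * a = b)

/-- In a graded-commutative graded ring `A`, if `x` is a
homogeneous element of degree `k > 0` inducing periodicity with `k` minimal
among degrees of periodicity-inducing elements, then `x` does not factor
non-trivially as `y·z` with `y` homogeneous of degree `0 < deg y < k`. -/
theorem stmt4 {A : Type*} [CommRing A] (𝒜 : ℕ → AddSubgroup A)
    [GradedRing 𝒜] (k : ℕ) (hk : 0 < k) (x : A)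
    (hx : InducesPeriodicity 𝒜 k x)
    (hmin : ∀ k' : ℕ, ∀ x' : A, 0 < k' → InducesPeriodicity 𝒜 k' x' → k ≤ k') :
    ¬ ∃ (d : ℕ) (y z : A), 0 < d ∧ d < k ∧ y ∈ 𝒜 d ∧ z ∈ 𝒜 (k - d) ∧
      x = y * z := by
  rintro ⟨d, y, z, hd, hdk, hy, hz, hxyz⟩
  obtain ⟨hx0, hxk, hinj, hsur⟩ := hx
  have hdle : d ≤ k := hdk.le
  -- y induces periodicity of degree d
  have hy0 : y ≠ 0 := by
    rintro rfl
    exact hx0 (by simp [hxyz])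
  have hyinj : ∀ i : ℕ, ∀ a ∈ 𝒜 i, y * a = 0 → a = 0 := by
    intro i a ha hya
    refine hinj i a ha ?_
    rw [hxyz, mul_assoc, mul_comm z a, ← mul_assoc, hya, zero_mul]
  have hysur : ∀ i : ℕ, ∀ b ∈ 𝒜 (i + d), ∃ a ∈ 𝒜 i, y * a = b := by
    intro i b hb
    have hzb : z * b ∈ 𝒜 (i + k) := by
      have := SetLike.mul_mem_graded hz hb
      rwa [show k - d + (i + d) = i + k by omega] at this
    obtain ⟨a, ha, hxa⟩ := hsur i (z * b) hzb
    refine ⟨a, ha, ?_⟩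
    have hmem : y * a - b ∈ 𝒜 (i + d) := by
      refine sub_mem ?_ hb
      have := SetLike.mul_mem_graded hy ha
      rwa [show d + i = i + d by omega] at this
    have : x * (y * a - b) = 0 := by
      have h2 : x * (y * a - b) = y * (x * a - z * b) := by rw [hxyz]; ring
      rw [h2, hxa, sub_self, mul_zero]
    have := hinj (i + d) _ hmem this
    exact sub_eq_zero.mp this
  have := hmin d y hd ⟨hy0, hy, hyinj, hysur⟩
  omega
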